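/- If G is a simple graph of order n ≥ 2 with girth at least 5 (no triangles and no 4-cycles), then the largest eigenvalue of the adjacency matrix of G is at most √(n-1). -/

import Mathlib

open SimpleGraph Finset Matrix

/-- Largest eigenvalue of a real matrix, as the supremum of its (real) eigenvalues. -/
noncomputable def maxEig {V : Type*} [Fintype V] (A : Matrix V V ℝ) : ℝ :=
  sSup {μ : ℝ | ∃ v : V → ℝ, v ≠ 0 ∧ A.mulVec v = μ • v}

/-- The eigenvalues of a real matrix with multiplicity, sorted increasingly
(the real roots of the characteristic polynomial). -/
noncomputable def eigsSorted {V : Type*} [Fintype V] [DecidableEq V]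
    (A : Matrix V V ℝ) : List ℝ :=
  A.charpoly.roots.sort (· ≤ ·)

/-- The second smallest eigenvalue (with multiplicity) of a real matrix. -/
noncomputable def secondEig {V : Type*} [Fintype V] [DecidableEq V]
    (A : Matrix V V ℝ) : ℝ :=
  (eigsSorted A).getD 1 0

/-- `G` has no triangles. -/
def TriangleFree {V : Type*} (G : SimpleGraph V) : Prop :=
  ∀ a b c : V, G.Adj a b → G.Adj b c → G.Adj c a → False

/-- `G` has no 4-cycles. -/
def C4Free {V : Type*} (G : SimpleGraph V) : Prop :=
  ∀ a b c d : V, a ≠ c → b ≠ d →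
    G.Adj a b → G.Adj b c → G.Adj c d → G.Adj d a → False

/-- `X` is a dominating set of `G`. -/
def IsDominatingSet {V : Type*} (G : SimpleGraph V) (X : Finset V) : Prop :=
  ∀ v : V, v ∉ X → ∃ u ∈ X, G.Adj u v

/-- The domination number of `G`. -/
noncomputable def domNum {V : Type*} [Fintype V] (G : SimpleGraph V) : ℕ :=
  sInf {k : ℕ | ∃ X : Finset V, IsDominatingSet G X ∧ X.card = k}

/-- Number of edges between `X` and its complement. -/
def crossEdges {V : Type*} [Fintype V] [DecidableEq V] (G : SimpleGraph V)
    [DecidableRel G.Adj] (X : Finset V) : ℕ :=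
  (Finset.univ.filter fun p : V × V => p.1 ∈ X ∧ p.2 ∉ X ∧ G.Adj p.1 p.2).card

theorem stmt_0 {n : ℕ} (hn : 2 ≤ n) (G : SimpleGraph (Fin n)) [DecidableRel G.Adj]
    (h3 : TriangleFree G) (h4 : C4Free G) :
    maxEig (G.adjMatrix ℝ) ≤ Real.sqrt ((n : ℝ) - 1) := by
  apply Real.sSup_le _ (Real.sqrt_nonneg _)
  rintro μ ⟨v, hv0, hv⟩
  obtain ⟨i, hi⟩ : ∃ i, ∀ j, |v j| ≤ |v i| := by
    obtain ⟨i, _, hi⟩ := Finset.exists_max_image Finset.univ (fun j => |v j|)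
      ⟨⟨0, by omega⟩, Finset.mem_univ _⟩
    exact ⟨i, fun j => hi j (Finset.mem_univ j)⟩
  have hvi : 0 < |v i| := by
    rcases Function.ne_iff.mp hv0 with ⟨j, hj⟩
    exact lt_of_lt_of_le (abs_pos.mpr hj) (hi j)
  set s : ℝ := if 0 ≤ v i then 1 else -1 with hs
  set w : Fin n → ℝ := s • v with hw
  have hwi : w i = |v i| := by
    simp only [hw, hs, Pi.smul_apply, smul_eq_mul]
    split
    · rw [abs_of_nonneg ‹_›]; ring
    · rw [abs_of_neg (by linarith [not_le.mp ‹_›])]; ring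
  have hwj : ∀ j, w j ≤ w i := by
    intro j
    have : |w j| = |v j| := by
      simp only [hw, hs, Pi.smul_apply, smul_eq_mul]
      split <;> simp [abs_mul]
    calc w j ≤ |w j| := le_abs_self _
      _ = |v j| := this
      _ ≤ |v i| := hi j
      _ = w i := hwi.symm
  have hAw : (G.adjMatrix ℝ).mulVec w = μ • w := by
    rw [hw, Matrix.mulVec_smul, hv, smul_comm]
  -- the set of 2-step walks from i
  set P : Finset (Fin n × Fin n) :=
    Finset.univ.filter (fun p : Fin n × Fin n => G.Adj i p.1 ∧ G.Adj p.1 p.2) with hP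
  have hkey : μ ^ 2 * w i = ∑ p ∈ P, w p.2 := by
    have h1 : ((G.adjMatrix ℝ * G.adjMatrix ℝ).mulVec w) i = μ ^ 2 * w i := by
      rw [← Matrix.mulVec_mulVec, hAw, Matrix.mulVec_smul, hAw, smul_smul]
      simp [pow_two]
    rw [← h1]
    rw [Matrix.mulVec, dotProduct]
    have h2 : ∀ k, (G.adjMatrix ℝ * G.adjMatrix ℝ) i k * w k
        = ∑ j, (G.adjMatrix ℝ) i j * ((G.adjMatrix ℝ) j k * w k) := by
      intro k
      rw [Matrix.mul_apply, Finset.sum_mul]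
      simp [mul_assoc]
    simp_rw [h2]
    rw [Finset.sum_comm]
    rw [hP, Finset.sum_filter, ← Finset.univ_product_univ, Finset.sum_product]
    apply Finset.sum_congr rfl
    intro j _
    rw [← Finset.sum_filter]
    by_cases hij : G.Adj i j
    · simp only [SimpleGraph.adjMatrix_apply, hij, if_true, one_mul]
      rw [Finset.sum_filter]
      apply Finset.sum_congr rfl
      intro k _
      by_cases hjk : G.Adj j k <;> simp [hjk]
    · simp [SimpleGraph.adjMatrix_apply, hij]
  have hcard : P.card ≤ n - 1 := by
    have hinj : ∀ p ∈ P, (if p.2 = i then p.1 else p.2) ∈ Finset.univ.erase i := by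
      rintro ⟨j, k⟩ hp
      simp only [hP, Finset.mem_filter] at hp
      obtain ⟨-, hij, hjk⟩ := hp
      simp only [Finset.mem_erase, Finset.mem_univ, and_true]
      split
      · exact fun h => G.loopless.irrefl i (h ▸ hij)
      · assumption
    have : P.card ≤ (Finset.univ.erase i).card := by
      apply Finset.card_le_card_of_injOn _ hinj
      rintro ⟨j, k⟩ hp ⟨j', k'⟩ hp' heq
      simp only [hP, Finset.mem_filter, Finset.mem_coe] at hp hp'
      obtain ⟨-, hij, hjk⟩ := hp
      obtain ⟨-, hij', hjk'⟩ := hp'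
      simp only at heq
      -- neither k ∼ i nor k' ∼ i when k ≠ i (triangle-free via i,j,k)
      have hki : ∀ (a b : Fin n), G.Adj i a → G.Adj a b → b ≠ i → ¬ G.Adj b i := by
        intro a b h1 h2 hbi hcon
        exact h3 i a b h1 h2 hcon
      by_cases h2i : k = i <;> by_cases h2i' : k' = i
      · subst h2i; subst h2i'
        simp only [if_pos rfl] at heq
        exact Prod.ext heq rfl
      · rw [if_pos h2i, if_neg h2i'] at heq
        rw [← heq] at hjk'
        rw [h2i] at hjk
        exact absurd hjk (fun h => h3 i j' j hij' hjk' h)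
      · rw [if_neg h2i, if_pos h2i'] at heq
        rw [heq] at hjk
        rw [h2i'] at hjk'
        exact absurd hjk' (fun h => h3 i j j' hij hjk h)
      · rw [if_neg h2i, if_neg h2i'] at heq
        rw [← heq] at hjk'
        by_cases hjj : j = j'
        · exact Prod.ext hjj heq
        · exact absurd hij' (fun _ => h4 i j k j' (fun h => h2i h.symm)
            hjj hij hjk (G.adj_symm hjk') (G.adj_symm hij'))
    calc P.card ≤ (Finset.univ.erase i).card := this
      _ = n - 1 := by rw [Finset.card_erase_of_mem (Finset.mem_univ i)]; simp
  have hsum : ∑ p ∈ P, w p.2 ≤ (P.card : ℝ) * w i := by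
    have := Finset.sum_le_card_nsmul P (fun p => w p.2) (w i) (fun p _ => hwj p.2)
    simpa [nsmul_eq_mul] using this
  have hbound : μ ^ 2 * w i ≤ ((n : ℝ) - 1) * w i := by
    rw [hkey]
    refine hsum.trans ?_
    apply mul_le_mul_of_nonneg_right _ (le_of_lt (hwi ▸ hvi))
    have : ((P.card : ℝ)) ≤ ((n - 1 : ℕ) : ℝ) := by exact_mod_cast hcard
    refine this.trans ?_
    rw [Nat.cast_sub (by omega)]
    simp
  have hmu2 : μ ^ 2 ≤ (n : ℝ) - 1 :=
    le_of_mul_le_mul_right (by linarith [hbound]) (hwi ▸ hvi)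
  calc μ ≤ |μ| := le_abs_self μ
    _ = Real.sqrt (μ ^ 2) := (Real.sqrt_sq_eq_abs μ).symm
    _ ≤ Real.sqrt ((n : ℝ) - 1) := Real.sqrt_le_sqrt hmu2
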